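/- Let T = (V, L) be a locally finite tree (a connected simple graph without cycles) in which every vertex has degree at least 2, let p be a prime and q ≥ 2. For each directed edge (v,x) let Q_{(v,x)}(j,i) ∈ ℚ_p (j,i ∈ {1,…,q}) satisfy |Q_{(v,x)}(j,i)|_p ≤ 1 and |Q_{(v,x)}(j,i) − Q_{(v,x)}(j,q)|_p ≤ 1/p for all i,j. Suppose z assigns to each directed edge (x,y) a vector (z_1(x,y), …, z_{q−1}(x,y)) with |z_i(x,y) − 1|_p ≤ 1/p for all i, such that for every directed edge (x,y) and every i ∈ {1,…,q−1}: z_i(x,y) = ∏_{v ∈ ∂{x}∖{y}} [1 + Σ_{j=1}^{q−1}(z_j(v,x) − 1)Q_{(v,x)}(j,i)] / [1 + Σ_{j=1}^{q−1}(z_j(v,x) − 1)Q_{(v,x)}(j,q)]. Then z_i(x,y) = 1 for every directed edge (x,y) and every i ∈ {1,…,q−1}. -/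

import Mathlib

open IsUltrametricDist in
/-- In a nonarchimedean field, products of elements that are `ε`-close to 1 (with `ε ≤ 1`)
stay `ε`-close to 1. -/
lemma padic_prod_sub_one_norm_le {p : ℕ} [Fact p.Prime] {ι : Type*} (s : Finset ι)
    (f : ι → ℚ_[p]) {ε : ℝ} (hε0 : 0 ≤ ε) (hε1 : ε ≤ 1)
    (h : ∀ v ∈ s, ‖f v - 1‖ ≤ ε) : ‖(∏ v ∈ s, f v) - 1‖ ≤ ε := by
  classical
  induction s using Finset.cons_induction with
  | empty => simpa using hε0
  | cons a s ha ih =>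
    rw [Finset.prod_cons]
    have hfa : ‖f a - 1‖ ≤ ε := h a (Finset.mem_cons_self a s)
    have hprod : ‖(∏ v ∈ s, f v) - 1‖ ≤ ε := ih fun v hv => h v (Finset.mem_cons_of_mem hv)
    have hfa1 : ‖f a‖ ≤ 1 := by
      calc ‖f a‖ = ‖(f a - 1) + 1‖ := by ring_nf
      _ ≤ max ‖f a - 1‖ ‖(1 : ℚ_[p])‖ := Padic.nonarchimedean _ _
      _ ≤ 1 := max_le (hfa.trans hε1) (by simp)
    have key : f a * ∏ v ∈ s, f v - 1 = f a * ((∏ v ∈ s, f v) - 1) + (f a - 1) := by ring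
    rw [key]
    refine (Padic.nonarchimedean _ _).trans (max_le ?_ hfa)
    rw [norm_mul]
    calc ‖f a‖ * ‖(∏ v ∈ s, f v) - 1‖ ≤ 1 * ε := by
          exact mul_le_mul hfa1 hprod (norm_nonneg _) zero_le_one
    _ = ε := one_mul ε

theorem padic_boundary_law_unique
    {V : Type*} [DecidableEq V] (G : SimpleGraph V)
    [∀ v : V, Fintype (G.neighborSet v)]
    (hT : G.IsTree) (hdeg : ∀ v : V, 2 ≤ G.degree v)
    (p : ℕ) [Fact p.Prime] (n : ℕ) (hn : 1 ≤ n)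
    (Q : V → V → Fin (n + 1) → Fin (n + 1) → ℚ_[p])
    (hQ1 : ∀ v x : V, G.Adj v x → ∀ j i, ‖Q v x j i‖ ≤ 1)
    (hQ2 : ∀ v x : V, G.Adj v x → ∀ j i,
      ‖Q v x j i - Q v x j (Fin.last n)‖ ≤ 1 / (p : ℝ))
    (z : V → V → Fin n → ℚ_[p])
    (hz : ∀ x y : V, G.Adj x y → ∀ i, ‖z x y i - 1‖ ≤ 1 / (p : ℝ))
    (hbl : ∀ x y : V, G.Adj x y → ∀ i : Fin n,
      z x y i = ∏ v ∈ (G.neighborFinset x).erase y,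
        (1 + ∑ j : Fin n, (z v x j - 1) * Q v x j.castSucc i.castSucc) /
        (1 + ∑ j : Fin n, (z v x j - 1) * Q v x j.castSucc (Fin.last n))) :
    ∀ x y : V, G.Adj x y → ∀ i : Fin n, z x y i = 1 := by
  have hp1 : (1 : ℝ) < p := by exact_mod_cast (Fact.out : p.Prime).one_lt
  have hp0 : (0 : ℝ) < 1 / p := by positivity
  have hple : (1 : ℝ) / p < 1 := by
    rw [div_lt_one (by linarith)]; exact hp1
  have hple' : (1 : ℝ) / p ≤ 1 := hple.le
  -- key induction : all edges are p^{-(k+1)} close to 1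
  have key : ∀ k : ℕ, ∀ x y : V, G.Adj x y → ∀ i : Fin n,
      ‖z x y i - 1‖ ≤ (1 / p) ^ (k + 1) := by
    intro k
    induction k with
    | zero => intro x y hxy i; simpa using hz x y hxy i
    | succ k ih =>
      intro x y hxy i
      rw [hbl x y hxy i]
      refine padic_prod_sub_one_norm_le _ _ (by positivity)
        (pow_le_one₀ hp0.le hple') ?_
      intro v hv
      have hvx : G.Adj v x := (G.adj_symm (by
        have := Finset.mem_of_mem_erase hv
        rwa [SimpleGraph.mem_neighborFinset] at this))
      set A := ∑ j : Fin n, (z v x j - 1) * Q v x j.castSucc i.castSucc with hA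
      set B := ∑ j : Fin n, (z v x j - 1) * Q v x j.castSucc (Fin.last n) with hB
      have hBnorm : ‖B‖ ≤ 1 / p := by
        refine IsUltrametricDist.norm_sum_le_of_forall_le_of_nonneg hp0.le ?_
        intro j _
        rw [norm_mul]
        calc ‖z v x j - 1‖ * ‖Q v x j.castSucc (Fin.last n)‖
            ≤ (1 / p) * 1 := mul_le_mul (hz v x hvx j) (hQ1 v x hvx _ _)
              (norm_nonneg _) hp0.le
        _ = 1 / p := mul_one _
      have h1B : ‖1 + B‖ = 1 := by
        rw [Padic.add_eq_max_of_ne (by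
          rw [norm_one]; exact fun h => absurd (h ▸ hBnorm) (not_le.mpr hple))]
        simp [max_eq_left (hBnorm.trans hple')]
      have hAB : ‖A - B‖ ≤ (1 / p) ^ (k + 1) * (1 / p) := by
        rw [hA, hB, ← Finset.sum_sub_distrib]
        refine IsUltrametricDist.norm_sum_le_of_forall_le_of_nonneg (by positivity) ?_
        intro j _
        rw [← mul_sub, norm_mul]
        exact mul_le_mul (ih v x hvx j) (hQ2 v x hvx _ _) (norm_nonneg _)
          (by positivity)
      have hne : (1 + B) ≠ 0 := by
        intro h; rw [h] at h1B; simp at h1B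
      have : (1 + A) / (1 + B) - 1 = (A - B) / (1 + B) := by
        field_simp
        ring
      rw [this, norm_div, h1B, div_one, pow_succ]
      exact hAB
  intro x y hxy i
  have hzero : ‖z x y i - 1‖ = 0 := by
    by_contra h
    have hpos : 0 < ‖z x y i - 1‖ := lt_of_le_of_ne (norm_nonneg _) (Ne.symm h)
    obtain ⟨k, hk⟩ := exists_pow_lt_of_lt_one hpos hple
    have := key k x y hxy i
    have h2 : (1 / (p : ℝ)) ^ (k + 1) ≤ (1 / p) ^ k :=
      pow_le_pow_of_le_one hp0.le hple' (Nat.le_succ k)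
    linarith
  exact sub_eq_zero.mp (norm_eq_zero.mp hzero)
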